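/- Let n be a positive integer and x_1,...,x_n, r_1,...,r_n positive integers. Set \Sigma = r_1 x_1 + ... + r_n x_n and \sigma = x_1 + ... + x_n. Then the power series 1/((1-q^{x_1})...(1-q^{x_n})(1-q^{\Sigma})) - 1/((1-q^{r_1 x_1})...(1-q^{r_n x_n})(1-q^{\sigma})) has all nonnegative coefficients. -/

import Mathlib

open PowerSeries Finset

noncomputable def geom (a : ℕ) : ℚ⟦X⟧ := PowerSeries.mk fun k => if a ∣ k then 1 else 0

lemma one_sub_mul_geom {a : ℕ} (ha : 0 < a) : (1 - (X : ℚ⟦X⟧) ^ a) * geom a = 1 := by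
  ext k
  rw [sub_mul, one_mul, mul_comm ((X : ℚ⟦X⟧) ^ a), map_sub, PowerSeries.coeff_mul_X_pow']
  simp only [geom, coeff_mk, coeff_one]
  by_cases hak : a ≤ k
  · have hk : k ≠ 0 := by omega
    have hiff : a ∣ k ↔ a ∣ k - a := by
      constructor
      · intro h; exact Nat.dvd_sub h dvd_rfl
      · intro h
        have := Nat.dvd_add h (dvd_refl a)
        rwa [Nat.sub_add_cancel hak] at this
    rw [if_pos hak, if_neg hk]
    simp only [← hiff, sub_self]
  · by_cases hk : k = 0
    · simp [hak, hk, ha.ne']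
    · have : ¬ a ∣ k := fun h => hak (Nat.le_of_dvd (Nat.pos_of_ne_zero hk) h)
      simp [hak, hk, this]

lemma coeff_prod_geom {N : ℕ} (w : Fin N → ℕ) (hw : ∀ i, 0 < w i) (k : ℕ) :
    (PowerSeries.coeff k) (∏ i, geom (w i)) =
    (((Fintype.piFinset fun _ : Fin N => Finset.range (k+1))).filter
      (fun m => ∑ i, w i * m i = k)).card := by
  rw [PowerSeries.coeff_prod]
  simp only [geom, coeff_mk]
  simp only [Finset.prod_boole]
  refine Eq.trans (@Finset.sum_boole (Fin N →₀ ℕ) ℚ _ _ (fun _ => decidableDforallFinset) _) ?_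
  norm_cast
  apply Finset.card_bij' (fun l _ => fun j => l j / w j)
      (fun m _ => Finsupp.equivFunOnFinite.symm fun j => w j * m j)
  · intro l hl
    simp only [mem_filter, mem_finsuppAntidiag] at hl
    obtain ⟨⟨hsum, -⟩, hdvd⟩ := hl
    simp only [mem_filter, Fintype.mem_piFinset, mem_range]
    constructor
    · intro j
      have h2 : l j ≤ ∑ i, l i := Finset.single_le_sum (fun i _ => Nat.zero_le _) (mem_univ j)
      have h3 : l j / w j ≤ l j := Nat.div_le_self _ _
      have h4 : ∑ i, l i = k := hsum
      omega
    · rw [← hsum]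
      exact Finset.sum_congr rfl fun i _ => Nat.mul_div_cancel' (hdvd i (mem_univ i)) 
  · intro m hm
    simp only [mem_filter, Fintype.mem_piFinset, mem_range] at hm
    simp only [mem_filter, mem_finsuppAntidiag]
    refine ⟨⟨?_, fun i _ => mem_univ i⟩, fun i _ => ?_⟩
    · simpa using hm.2
    · simp
  · intro l hl
    simp only [mem_filter, mem_finsuppAntidiag] at hl
    ext j
    simp [Nat.mul_div_cancel' (hl.2 j (mem_univ j))]
  · intro m hm
    funext j
    simp [Nat.mul_div_cancel_left _ (hw j)]

lemma inv_prod {N : ℕ} (w : Fin N → ℕ) (hw : ∀ i, 0 < w i) :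
    (∏ i, (1 - (X : ℚ⟦X⟧) ^ (w i)))⁻¹ = ∏ i, geom (w i) := by
  rw [PowerSeries.inv_eq_iff_mul_eq_one]
  · rw [← Finset.prod_mul_distrib]
    apply Finset.prod_eq_one
    intro i _
    rw [mul_comm]
    exact one_sub_mul_geom (hw i)
  · rw [map_prod]
    have : ∀ i ∈ (univ : Finset (Fin N)),
        (constantCoeff) (1 - (X : ℚ⟦X⟧) ^ (w i)) = 1 := by
      intro i _
      rw [map_sub, map_one, map_pow, constantCoeff_X, zero_pow (hw i).ne', sub_zero]
    rw [Finset.prod_congr rfl this, Finset.prod_const_one]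
    exact one_ne_zero

theorem proposal_L1 (n : ℕ) (hn : 0 < n) (x r : Fin n → ℕ)
    (hx : ∀ i, 0 < x i) (hr : ∀ i, 0 < r i) (k : ℕ) :
    0 ≤ PowerSeries.coeff k
      (((∏ i, (1 - (X : ℚ⟦X⟧) ^ (x i))) * (1 - X ^ (∑ i, r i * x i)))⁻¹ -
       ((∏ i, (1 - (X : ℚ⟦X⟧) ^ (r i * x i))) * (1 - X ^ (∑ i, x i)))⁻¹) := by
  haveI : Nonempty (Fin n) := ⟨⟨0, hn⟩⟩
  have hSS : 0 < ∑ i, r i * x i :=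
    Finset.sum_pos (fun i _ => Nat.mul_pos (hr i) (hx i)) Finset.univ_nonempty
  have hss : 0 < ∑ i, x i := Finset.sum_pos (fun i _ => hx i) Finset.univ_nonempty
  -- weight vectors
  set WA : Fin (n+1) → ℕ := Fin.snoc x (∑ i, r i * x i) with hWA
  set WB : Fin (n+1) → ℕ := Fin.snoc (fun i => r i * x i) (∑ i, x i) with hWB
  have hWApos : ∀ i, 0 < WA i := by
    intro i
    induction i using Fin.lastCases with
    | last => simpa [hWA] using hSS
    | cast i => simpa [hWA] using hx i
  have hWBpos : ∀ i, 0 < WB i := by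
    intro i
    induction i using Fin.lastCases with
    | last => simpa [hWB] using hss
    | cast i => simpa [hWB] using Nat.mul_pos (hr i) (hx i)
  have eA : (∏ i, (1 - (X : ℚ⟦X⟧) ^ (x i))) * (1 - X ^ (∑ i, r i * x i)) =
      ∏ i, (1 - (X : ℚ⟦X⟧) ^ (WA i)) := by
    rw [Fin.prod_univ_castSucc]
    simp [hWA]
  have eB : (∏ i, (1 - (X : ℚ⟦X⟧) ^ (r i * x i))) * (1 - X ^ (∑ i, x i)) =
      ∏ i, (1 - (X : ℚ⟦X⟧) ^ (WB i)) := by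
    rw [Fin.prod_univ_castSucc]
    simp [hWB]
  rw [eA, eB, inv_prod _ hWApos, inv_prod _ hWBpos, map_sub, coeff_prod_geom _ hWApos,
    coeff_prod_geom _ hWBpos, sub_nonneg, Nat.cast_le]
  -- now a cardinality inequality, via an explicit injection
  set a : (Fin (n+1) → ℕ) → ℕ :=
    fun M => Finset.univ.inf' Finset.univ_nonempty fun i : Fin n => M i.castSucc with ha
  set ψ : (Fin (n+1) → ℕ) → (Fin (n+1) → ℕ) :=
    fun M => Fin.snoc (fun i => r i * (M i.castSucc - a M) + M (Fin.last n)) (a M) with hψ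
  have hale : ∀ M (i : Fin n), a M ≤ M i.castSucc :=
    fun M i => Finset.inf'_le _ (Finset.mem_univ i)
  have hrec : ∀ M : Fin (n+1) → ℕ,
      Finset.univ.inf' Finset.univ_nonempty (fun i : Fin n => ψ M i.castSucc)
        = M (Fin.last n) := by
    intro M
    apply le_antisymm
    · obtain ⟨j, -, hj⟩ := Finset.exists_mem_eq_inf' (Finset.univ_nonempty)
        (fun i : Fin n => M i.castSucc)
      refine le_trans (Finset.inf'_le _ (Finset.mem_univ j)) ?_
      simp [hψ, ha, ← hj, Nat.sub_self]
    · apply Finset.le_inf'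
      intro i _
      simp [hψ]
  -- key sum computation
  have hkey : ∀ M : Fin (n+1) → ℕ,
      (∑ i, WB i * M i = k) →
      ∑ i, WA i * ψ M i = k := by
    intro M hM
    rw [Fin.sum_univ_castSucc] at hM ⊢
    have h1 : ∀ i : Fin n,
        WA i.castSucc * ψ M i.castSucc + WB i.castSucc * a M
          = WB i.castSucc * M i.castSucc + x i * M (Fin.last n) := by
      intro i
      obtain ⟨d, hd⟩ := Nat.le.dest (hale M i)
      have hsub : M i.castSucc - a M = d := by omega
      simp only [hψ, hWA, hWB, Fin.snoc_castSucc, hsub, ← hd, Nat.add_sub_cancel_left]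
      ring
    calc (∑ i : Fin n, WA i.castSucc * ψ M i.castSucc) + WA (Fin.last n) * ψ M (Fin.last n)
        = (∑ i : Fin n, (WA i.castSucc * ψ M i.castSucc + WB i.castSucc * a M))
          - (∑ i : Fin n, WB i.castSucc * a M) + WA (Fin.last n) * ψ M (Fin.last n) := by
          rw [Finset.sum_add_distrib]; omega
      _ = (∑ i : Fin n, (WB i.castSucc * M i.castSucc + x i * M (Fin.last n)))
          - (∑ i : Fin n, WB i.castSucc * a M) + WA (Fin.last n) * ψ M (Fin.last n) := by
          rw [Finset.sum_congr rfl fun i _ => h1 i]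
      _ = k := by
          rw [Finset.sum_add_distrib, ← Finset.sum_mul, ← Finset.sum_mul]
          have e1 : ∑ i : Fin n, WB i.castSucc = ∑ i, r i * x i := by
            simp [hWB]
          have e3 : WA (Fin.last n) = ∑ i, r i * x i := by simp [hWA]
          have e4 : WB (Fin.last n) = ∑ i, x i := by simp [hWB]
          have e5 : ψ M (Fin.last n) = a M := by simp [hψ]
          rw [e1, e3, e5]
          have hbig : (∑ i : Fin n, r i * x i) * a M ≤
              ∑ i : Fin n, WB i.castSucc * M i.castSucc := by
            rw [← e1, Finset.sum_mul]
            apply Finset.sum_le_sum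
            intro i _
            exact Nat.mul_le_mul_left _ (hale M i)
          rw [e4] at hM
          omega
  apply Finset.card_le_card_of_injOn ψ
  · -- maps to
    intro M hM
    simp only [Finset.mem_coe, Finset.mem_filter, Fintype.mem_piFinset, Finset.mem_range] at hM ⊢
    obtain ⟨hMrange, hMsum⟩ := hM
    have hsum' := hkey M hMsum
    refine ⟨?_, hsum'⟩
    intro j
    have hterm : WA j * ψ M j ≤ k := by
      rw [← hsum']
      exact Finset.single_le_sum (f := fun i => WA i * ψ M i)
        (fun i _ => Nat.zero_le _) (Finset.mem_univ j)
    have : ψ M j ≤ WA j * ψ M j := Nat.le_mul_of_pos_left _ (hWApos j)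
    omega
  · -- injective
    intro M hM M' hM' hψeq
    have hlast : a M = a M' := by
      have := congrFun hψeq (Fin.last n)
      simpa [hψ] using this
    have hMl : M (Fin.last n) = M' (Fin.last n) := by
      rw [← hrec M, ← hrec M']
      apply Finset.inf'_congr _ rfl
      intro i _
      rw [hψeq]
    funext j
    induction j using Fin.lastCases with
    | last => exact hMl
    | cast i =>
      have := congrFun hψeq i.castSucc
      simp only [hψ, Fin.snoc_castSucc, hMl, hlast] at this
      have h2 : r i * (M i.castSucc - a M') = r i * (M' i.castSucc - a M') := by omega
      have h3 := Nat.eq_of_mul_eq_mul_left (hr i) h2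
      have h4 := hale M i
      have h5 := hale M' i
      rw [hlast] at h4
      omega
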